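/- Let g = (g_1, …, g_s) ⊂ ℚ[z_1, …, z_k] be invariant under S_{t_1} × ⋯ × S_{t_k} and satisfy condition (A), i.e. the Jacobian matrix of g has rank s at every point of V(g) ⊂ ℂ^ℓ where ℓ = t_1 + ⋯ + t_k. For each i let ζ_{g_i} ∈ ℚ[e_{1,1}, …, e_{t_k,k}] be the unique polynomial with g_i = ζ_{g_i}(E_{1,1}, …, E_{t_k,k}), where E_{j,i} is the j-th elementary symmetric polynomial in the block z_i. Then the sequence (ζ_{g_1}, …, ζ_{g_s}) also satisfies condition (A): its Jacobian matrix with respect to the ℓ variables e_{j,i} has rank s at every point of V(ζ_{g_1}, …, ζ_{g_s}) ⊂ ℂ^ℓ. -/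

import Mathlib

open MvPolynomial

/-- Chain rule for `pderiv` of a polynomial substitution. -/
lemma pderiv_aeval_eq_sum {σ τ : Type*} [Fintype τ] [DecidableEq σ] [DecidableEq τ]
    (E : τ → MvPolynomial σ ℚ) (p : MvPolynomial τ ℚ) (v : σ) :
    pderiv v (aeval E p) = ∑ u : τ, aeval E (pderiv u p) * pderiv v (E u) := by
  induction p using MvPolynomial.induction_on with
  | C a => simp
  | add p q hp hq =>
    simp only [map_add, hp, hq, add_mul, Finset.sum_add_distrib]
  | mul_X p i hp =>
    rw [map_mul, aeval_X, pderiv_mul, hp]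
    have key : ∀ u : τ, aeval E (pderiv u (p * X i)) * pderiv v (E u)
        = aeval E (pderiv u p) * pderiv v (E u) * E i
          + (if u = i then aeval E p * pderiv v (E i) else 0) := by
      intro u
      rw [pderiv_mul, pderiv_X]
      by_cases h : u = i
      · subst h; simp; ring
      · simp [h, Pi.single_eq_of_ne h]
        ring
    simp_rw [key]
    rw [Finset.sum_add_distrib, Finset.sum_ite_eq' Finset.univ i
      (fun _ => aeval E p * pderiv v (E i)), if_pos (Finset.mem_univ i), ← Finset.sum_mul]

/-- Surjectivity of elementary symmetric functions over ℂ. -/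
lemma exists_esymm_eq (n : ℕ) (c : Fin n → ℂ) :
    ∃ z : Fin n → ℂ, ∀ j : Fin n,
      (Finset.univ.val.map z).esymm ((j : ℕ) + 1) = c j := by
  rcases Nat.eq_zero_or_pos n with h | hn
  · exact ⟨fun _ => 0, fun j => absurd j.2 (by omega)⟩
  set r : Polynomial ℂ := ∑ j : Fin n,
      Polynomial.C ((-1 : ℂ) ^ ((j : ℕ) + 1) * c j) * Polynomial.X ^ (n - ((j : ℕ) + 1)) with hr
  set q : Polynomial ℂ := Polynomial.X ^ n + r with hq
  have hrdeg : r.degree < n := by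
    refine lt_of_le_of_lt (Polynomial.degree_sum_le _ _) ?_
    rw [Finset.sup_lt_iff (by exact_mod_cast WithBot.bot_lt_coe (n:ℕ))]
    intro j _
    refine lt_of_le_of_lt (Polynomial.degree_C_mul_X_pow_le _ _) ?_
    have hj := j.2
    exact_mod_cast (by omega : n - ((j : ℕ) + 1) < n)
  have hmonic : q.Monic := Polynomial.monic_X_pow_add hrdeg
  have hdeg : q.natDegree = n := by
    have : q.degree = n := by
      rw [hq, Polynomial.degree_add_eq_left_of_degree_lt
        (by rwa [Polynomial.degree_X_pow]), Polynomial.degree_X_pow]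
    exact Polynomial.natDegree_eq_of_degree_eq_some this
  have hcoeff : ∀ j : Fin n, q.coeff (n - ((j : ℕ) + 1)) = (-1 : ℂ) ^ ((j : ℕ) + 1) * c j := by
    intro j
    rw [hq, Polynomial.coeff_add, Polynomial.coeff_X_pow, if_neg (by omega), zero_add, hr,
      Polynomial.finset_sum_coeff]
    rw [Finset.sum_eq_single j]
    · rw [Polynomial.coeff_C_mul, Polynomial.coeff_X_pow, if_pos rfl, mul_one]
    · intro u _ hu
      rw [Polynomial.coeff_C_mul, Polynomial.coeff_X_pow, if_neg, mul_zero]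
      intro hcontra
      apply hu
      have hu1 : (u : ℕ) + 1 ≤ n := u.2
      have hj1 : (j : ℕ) + 1 ≤ n := j.2
      have : (u : ℕ) = (j : ℕ) := by omega
      exact Fin.ext this
    · intro h; exact absurd (Finset.mem_univ j) h
  have hsplits : q.Splits := IsAlgClosed.splits q
  have hcard : Multiset.card q.roots = n := by
    rw [← hdeg]; exact (Polynomial.splits_iff_card_roots).mp hsplits
  have hesymm : ∀ j : Fin n, q.roots.esymm ((j : ℕ) + 1) = c j := by
    intro j
    have hle : n - ((j : ℕ) + 1) ≤ q.natDegree := by rw [hdeg]; omega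
    have h2 := Polynomial.coeff_eq_esymm_roots_of_card (by rw [hcard, hdeg]) hle
    rw [hdeg] at h2
    have hsub : n - (n - ((j : ℕ) + 1)) = (j : ℕ) + 1 := Nat.sub_sub_self j.2
    rw [hsub, hmonic.leadingCoeff, one_mul, hcoeff j] at h2
    have hne : ((-1 : ℂ) ^ ((j : ℕ) + 1)) ≠ 0 := by
      simp
    field_simp at h2
    exact h2.symm
  have hlen : q.roots.toList.length = n := by rw [Multiset.length_toList, hcard]
  refine ⟨fun j => q.roots.toList.get (Fin.cast hlen.symm j), fun j => ?_⟩
  have hmap : Finset.univ.val.map (fun j : Fin n => q.roots.toList.get (Fin.cast hlen.symm j))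
      = q.roots := by
    rw [Fin.univ_val_map]
    have : List.ofFn (fun j : Fin n => q.roots.toList.get (Fin.cast hlen.symm j))
        = q.roots.toList := by
      apply List.ext_get
      · simp [hlen]
      · intro i h1 h2
        simp [List.get_ofFn]
    rw [this, Multiset.coe_toList]
  rw [hmap]
  exact hesymm j


/-- if the `S_{t_1} × ⋯ × S_{t_k}`-invariant system `g = (g_1,…,g_s)`
satisfies condition (A) (Jacobian of rank `s` at every complex zero), and `ζ_{g_i}` are
the unique polynomials with `g_i = ζ_{g_i}(E_{1,1},…,E_{t_k,k})` (elementary symmetric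
polynomials of the blocks), then `(ζ_{g_1},…,ζ_{g_s})` also satisfies condition (A). -/
theorem elementary_representation_preserves_conditionA
    (k s : ℕ) (t : Fin k → ℕ) (ht : ∀ i, 0 < t i)
    (g ζ : Fin s → MvPolynomial ((i : Fin k) × Fin (t i)) ℚ)
    (hinv : ∀ a, ∀ σ : (i : Fin k) → Equiv.Perm (Fin (t i)),
      rename (fun p : (i : Fin k) × Fin (t i) =>
        (⟨p.1, σ p.1 p.2⟩ : (i : Fin k) × Fin (t i))) (g a) = g a)
    (hrep : ∀ a, aeval (fun p : (i : Fin k) × Fin (t i) =>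
        rename (fun j : Fin (t p.1) => (⟨p.1, j⟩ : (i : Fin k) × Fin (t i)))
          (esymm (Fin (t p.1)) ℚ ((p.2 : ℕ) + 1))) (ζ a) = g a)
    (hA : ∀ w : ((i : Fin k) × Fin (t i)) → ℂ, (∀ a, aeval w (g a) = 0) →
      (Matrix.of fun (a : Fin s) (v : (i : Fin k) × Fin (t i)) =>
        aeval w (pderiv v (g a))).rank = s) :
    ∀ w : ((i : Fin k) × Fin (t i)) → ℂ, (∀ a, aeval w (ζ a) = 0) →
      (Matrix.of fun (a : Fin s) (v : (i : Fin k) × Fin (t i)) =>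
        aeval w (pderiv v (ζ a))).rank = s := by
  intro w hw
  set E : ((i : Fin k) × Fin (t i)) → MvPolynomial ((i : Fin k) × Fin (t i)) ℚ :=
    fun p => rename (fun j : Fin (t p.1) => (⟨p.1, j⟩ : (i : Fin k) × Fin (t i)))
      (esymm (Fin (t p.1)) ℚ ((p.2 : ℕ) + 1)) with hE
  choose z hz using fun i : Fin k => exists_esymm_eq (t i) (fun j => w ⟨i, j⟩)
  set Z : ((i : Fin k) × Fin (t i)) → ℂ := fun p => z p.1 p.2 with hZ
  have hEval : ∀ u : (i : Fin k) × Fin (t i), aeval Z (E u) = w u := by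
    intro u
    rw [hE]
    rw [aeval_rename]
    have : (Z ∘ fun j : Fin (t u.1) => (⟨u.1, j⟩ : (i : Fin k) × Fin (t i))) = z u.1 := rfl
    rw [this, aeval_esymm_eq_multiset_esymm, hz u.1 u.2]
  have hcomp : ∀ p : MvPolynomial ((i : Fin k) × Fin (t i)) ℚ,
      aeval Z (aeval E p) = aeval w p := by
    intro p
    have := congrFun (congrArg DFunLike.coe (comp_aeval (f := E) (aeval Z))) p
    simp only [AlgHom.coe_comp, Function.comp_apply] at this
    rw [this]
    have hfun : (fun u => aeval Z (E u)) = w := funext hEval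
    rw [hfun]
  have hgz : ∀ a, aeval Z (g a) = 0 := by
    intro a
    rw [← hrep a, hcomp, hw a]
  have hrank := hA Z hgz
  set Mζ : Matrix (Fin s) ((i : Fin k) × Fin (t i)) ℂ :=
    Matrix.of fun a v => aeval w (pderiv v (ζ a)) with hMζ
  set J : Matrix ((i : Fin k) × Fin (t i)) ((i : Fin k) × Fin (t i)) ℂ :=
    Matrix.of fun u v => aeval Z (pderiv v (E u)) with hJ
  have hfact : (Matrix.of fun (a : Fin s) (v : (i : Fin k) × Fin (t i)) =>
      aeval Z (pderiv v (g a))) = Mζ * J := by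
    ext a v
    rw [Matrix.mul_apply]
    simp only [Matrix.of_apply, hMζ, hJ]
    rw [← hrep a, pderiv_aeval_eq_sum E (ζ a) v, map_sum]
    refine Finset.sum_congr rfl fun u _ => ?_
    rw [map_mul, hcomp]
  rw [hfact] at hrank
  refine le_antisymm ?_ ?_
  · exact (Matrix.rank_le_card_height Mζ).trans (by simp)
  · calc (s : ℕ) = (Mζ * J).rank := hrank.symm
      _ ≤ Mζ.rank := Matrix.rank_mul_le_left Mζ J
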